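/- Let d ≥ 2, let A be a real d×d matrix, r ≥ 0, and let x : [−r,∞) → ℝ^d be continuous, differentiable on (0,∞), with x(t) ∈ Δ_d for all t ≥ −r, satisfying the discrete-delay replicator equation x_i′(t) = x_i(t)·[(A x(t−r))_i − ⟨x(t), A x(t−r)⟩] for all t > 0 and all i ∈ {1,…,d}. Assume there exists ε > 0 such that x_i(t) ≥ ε for all t ≥ 0 and all i, and assume p ∈ Δ_d satisfies p_i > 0 for all i and (Ap)_1 = (Ap)_2 = ⋯ = (Ap)_d, and that p is the unique such point of Δ_d. Then for every i, lim_{T→∞} (1/T)∫₀^T x_i(t) dt = p_i. -/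

import Mathlib

open Filter

lemma aux_inv_mul {c : ℝ → ℝ} {C : ℝ} (h : ∀ᶠ T in atTop, |c T| ≤ C) :
    Tendsto (fun T => T⁻¹ * c T) atTop (nhds 0) := by
  have hg : Tendsto (fun T : ℝ => T⁻¹ * C) atTop (nhds 0) := by
    simpa using tendsto_inv_atTop_zero.mul_const C
  apply squeeze_zero_norm' _ hg
  filter_upwards [h, eventually_ge_atTop (1:ℝ)] with T hT hT1
  have hTpos : (0:ℝ) < T := lt_of_lt_of_le one_pos hT1
  rw [Real.norm_eq_abs, abs_mul, abs_inv, abs_of_pos hTpos]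
  exact mul_le_mul_of_nonneg_left hT (by positivity)

lemma aux_compact_tendsto {X : Type*} [TopologicalSpace X] {K : Set X} (hK : IsCompact K)
    {g : X → ℝ} (hg : ContinuousOn g K) (hg0 : ∀ q ∈ K, 0 ≤ g q) {p : X}
    (huniq : ∀ q ∈ K, g q = 0 → q = p) {z : ℝ → X}
    (hzK : ∀ᶠ T in atTop, z T ∈ K)
    (hgz : Tendsto (fun T => g (z T)) atTop (nhds 0)) :
    Tendsto z atTop (nhds p) := by
  have hne : K.Nonempty := by
    rcases hzK.exists with ⟨T, hT⟩; exact ⟨z T, hT⟩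
  obtain ⟨q0, hq0K, hq0min⟩ := hK.exists_isMinOn hne hg
  have hq0 : g q0 = 0 := by
    have h1 : g q0 ≤ 0 := by
      have : ∀ᶠ T in atTop, g q0 ≤ g (z T) := by
        filter_upwards [hzK] with T hT using hq0min hT
      exact ge_of_tendsto hgz this
    exact le_antisymm h1 (hg0 _ hq0K)
  have hpK : p ∈ K := huniq q0 hq0K hq0 ▸ hq0K
  rw [tendsto_nhds]
  intro U hU hpU
  by_cases hKU : (K \ U).Nonempty
  · have hK' : IsCompact (K \ U) := hK.diff hU
    obtain ⟨q1, hq1K, hq1min⟩ := hK'.exists_isMinOn hKU (hg.mono Set.diff_subset)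
    have hq1pos : 0 < g q1 := by
      rcases lt_or_eq_of_le (hg0 _ hq1K.1) with h | h
      · exact h
      · exact absurd (huniq q1 hq1K.1 h.symm) (by intro he; exact hq1K.2 (he ▸ hpU))
    filter_upwards [hzK, hgz.eventually (gt_mem_nhds hq1pos)] with T hT hlt
    by_contra hnot
    exact absurd hlt (not_lt.2 (hq1min ⟨hT, hnot⟩))
  · filter_upwards [hzK] with T hT
    exact Set.diff_eq_empty.1 (Set.not_nonempty_iff_eq_empty.1 hKU) hT

/-- Time-averaging for the discrete-delay replicator equation: if an interior
solution of `xᵢ'(t) = xᵢ(t)[(A x(t−r))ᵢ − ⟨x(t), A x(t−r)⟩]` stays bounded away from the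
boundary of the simplex and `p` is the unique interior rest point of the replicator ODE
(all components of `Ap` equal), then the time averages `(1/T)∫₀^T xᵢ(t) dt` converge to `pᵢ`. -/
theorem stmt_8 (d : ℕ) (hd : 2 ≤ d) (A : Matrix (Fin d) (Fin d) ℝ) (r : ℝ) (hr : 0 ≤ r)
    (x : ℝ → Fin d → ℝ)
    (hxcont : ContinuousOn x (Set.Ici (-r)))
    (hxsimplex : ∀ t : ℝ, -r ≤ t → x t ∈ stdSimplex ℝ (Fin d))
    (hode : ∀ t : ℝ, 0 < t →
      HasDerivAt x
        (fun i => x t i * (A.mulVec (x (t - r)) i - ∑ k, x t k * A.mulVec (x (t - r)) k))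
        t)
    (ε : ℝ) (hε : 0 < ε) (hint : ∀ t : ℝ, 0 ≤ t → ∀ i, ε ≤ x t i)
    (p : Fin d → ℝ) (hp : p ∈ stdSimplex ℝ (Fin d)) (hppos : ∀ i, 0 < p i)
    (hpeq : ∀ i j, A.mulVec p i = A.mulVec p j)
    (hpuniq : ∀ q ∈ stdSimplex ℝ (Fin d),
      (∀ i, 0 < q i) → (∀ i j, A.mulVec q i = A.mulVec q j) → q = p) :
    ∀ i, Tendsto (fun T : ℝ => T⁻¹ * ∫ t in (0:ℝ)..T, x t i) atTop (nhds (p i)) := by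
  -- notation
  set z : ℝ → Fin d → ℝ := fun T i => T⁻¹ * ∫ t in (0:ℝ)..T, x t i with hz
  set y : ℝ → Fin d → ℝ := fun T k => T⁻¹ * ∫ t in (0:ℝ)..T, x (t - r) k with hy
  set F : ℝ → Fin d → ℝ := fun t => A.mulVec (x (t - r)) with hF
  set w : ℝ → Fin d → ℝ := fun T i => T⁻¹ * ∫ t in (0:ℝ)..T, F t i with hw
  set φ : ℝ → ℝ := fun t => ∑ k, x t k * F t k with hφ
  set Φ : ℝ → ℝ := fun T => T⁻¹ * ∫ t in (0:ℝ)..T, φ t with hΦ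
  -- basic bounds on x
  have hx01 : ∀ t, -r ≤ t → ∀ k, 0 ≤ x t k ∧ x t k ≤ 1 := by
    intro t ht k
    refine ⟨(hxsimplex t ht).1 k, ?_⟩
    calc x t k ≤ ∑ i, x t i :=
          Finset.single_le_sum (fun i _ => (hxsimplex t ht).1 i) (Finset.mem_univ k)
      _ = 1 := (hxsimplex t ht).2
  -- componentwise continuity
  have hxc : ∀ k, ContinuousOn (fun t => x t k) (Set.Ici (-r)) :=
    fun k => (continuous_apply k).comp_continuousOn hxcont
  have hsub : ∀ a b : ℝ, -r ≤ a → -r ≤ b → Set.uIcc a b ⊆ Set.Ici (-r) := by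
    intro a b ha hb t ht
    exact le_trans (le_min ha hb) ht.1
  have hxint : ∀ (k : Fin d) (a b : ℝ), -r ≤ a → -r ≤ b →
      IntervalIntegrable (fun t => x t k) MeasureTheory.volume a b := by
    intro k a b ha hb
    exact ((hxc k).mono (hsub a b ha hb)).intervalIntegrable
  -- continuity of F and φ on [0,∞)
  have hshiftc : ∀ k, ContinuousOn (fun t => x (t - r) k) (Set.Ici 0) := by
    intro k
    apply (hxc k).comp ((continuous_id.sub continuous_const).continuousOn)
    intro t ht
    simp only [Set.mem_Ici, id_eq, Pi.sub_apply] at *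
    linarith
  have hFc : ∀ i, ContinuousOn (fun t => F t i) (Set.Ici 0) := by
    intro i
    have : (fun t => F t i) = fun t => ∑ k, A i k * x (t - r) k := by
      funext t; simp [hF, Matrix.mulVec, dotProduct]
    rw [this]
    exact continuousOn_finset_sum _ fun k _ => (hshiftc k).const_smul (A i k)
  have hφc : ContinuousOn φ (Set.Ici 0) := by
    apply continuousOn_finset_sum
    intro k _
    exact ((hxc k).mono (Set.Ici_subset_Ici.2 (by linarith))).mul (hFc k)
  have hFint : ∀ (i : Fin d) (T : ℝ), 0 ≤ T →
      IntervalIntegrable (fun t => F t i) MeasureTheory.volume 0 T := by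
    intro i T hT
    exact ((hFc i).mono (by rw [Set.uIcc_of_le hT]; exact Set.Icc_subset_Ici_self)).intervalIntegrable
  have hφint : ∀ T : ℝ, 0 ≤ T → IntervalIntegrable φ MeasureTheory.volume 0 T := by
    intro T hT
    exact (hφc.mono (by rw [Set.uIcc_of_le hT]; exact Set.Icc_subset_Ici_self)).intervalIntegrable
  have hshiftint : ∀ (k : Fin d) (T : ℝ), 0 ≤ T →
      IntervalIntegrable (fun t => x (t - r) k) MeasureTheory.volume 0 T := by
    intro k T hT
    exact ((hshiftc k).mono (by rw [Set.uIcc_of_le hT]; exact Set.Icc_subset_Ici_self)).intervalIntegrable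
  -- FTC for log
  have hlogftc : ∀ (i : Fin d) (T : ℝ), 0 < T →
      (∫ t in (0:ℝ)..T, (F t i - φ t)) = Real.log (x T i) - Real.log (x 0 i) := by
    intro i T hT
    have hIcc : Set.Icc (0:ℝ) T ⊆ Set.Ici (-r) := fun t ht => le_trans (by linarith) ht.1
    apply intervalIntegral.integral_eq_sub_of_hasDeriv_right_of_le hT.le
    · apply ContinuousOn.log ((hxc i).mono hIcc)
      intro t ht
      exact ne_of_gt (lt_of_lt_of_le hε (hint t ht.1 i))
    · intro t ht
      have hd1 : HasDerivAt (fun s => x s i) (x t i * (F t i - φ t)) t :=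
        hasDerivAt_pi.1 (hode t ht.1) i
      have hne : x t i ≠ 0 := ne_of_gt (lt_of_lt_of_le hε (hint t ht.1.le i))
      have hlog := hd1.log hne
      have heq : x t i * (F t i - φ t) / x t i = F t i - φ t := by field_simp
      rw [heq] at hlog
      exact hlog.hasDerivWithinAt
    · exact (hFint i T hT.le).sub (hφint T hT.le)
  -- the log average tends to 0
  have hlogsmall : ∀ i : Fin d,
      Tendsto (fun T => T⁻¹ * (Real.log (x T i) - Real.log (x 0 i))) atTop (nhds 0) := by
    intro i
    have hb : ∀ s : ℝ, 0 ≤ s → |Real.log (x s i)| ≤ |Real.log ε| := by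
      intro s hs
      have h1 : ε ≤ x s i := hint s hs i
      have h2 : x s i ≤ 1 := (hx01 s (by linarith) i).2
      have h3 : Real.log ε ≤ Real.log (x s i) := Real.log_le_log hε h1
      have h4 : Real.log (x s i) ≤ 0 := Real.log_nonpos (by linarith) h2
      have h5 := neg_abs_le (Real.log ε)
      have h6 := abs_nonneg (Real.log ε)
      rw [abs_le]; constructor <;> linarith
    apply aux_inv_mul (C := 2 * |Real.log ε|)
    filter_upwards [eventually_ge_atTop (0:ℝ)] with T hT
    have hb1 := hb T hT
    have hb2 := hb 0 le_rfl
    have := abs_sub (Real.log (x T i)) (Real.log (x 0 i))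
    linarith
  -- hence w T i - Φ T → 0
  have hwΦ : ∀ i : Fin d, Tendsto (fun T => w T i - Φ T) atTop (nhds 0) := by
    intro i
    apply (hlogsmall i).congr'
    filter_upwards [eventually_gt_atTop (0:ℝ)] with T hT
    rw [hw, hΦ]
    simp only
    rw [← mul_sub, ← intervalIntegral.integral_sub (hFint i T hT.le) (hφint T hT.le),
      hlogftc i T hT]
  have hwij : ∀ i j : Fin d, Tendsto (fun T => w T i - w T j) atTop (nhds 0) := by
    intro i j
    have := (hwΦ i).sub (hwΦ j)
    simp only [sub_zero] at this
    apply this.congr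
    intro T; ring
  -- w T = A.mulVec (y T) for T ≥ 0
  have hwy : ∀ (i : Fin d) (T : ℝ), 0 ≤ T → w T i = A.mulVec (y T) i := by
    intro i T hT
    have hFrep : ∀ t : ℝ, F t i = ∑ k, A i k * x (t - r) k := by
      intro t; simp [hF, Matrix.mulVec, dotProduct]
    have h1 : (∫ t in (0:ℝ)..T, F t i)
        = ∑ k, A i k * ∫ t in (0:ℝ)..T, x (t - r) k := by
      rw [intervalIntegral.integral_congr (g := fun t => ∑ k, A i k * x (t - r) k)
        (fun t _ => hFrep t)]
      rw [intervalIntegral.integral_finset_sum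
        (fun k _ => (hshiftint k T hT).const_mul (A i k))]
      exact Finset.sum_congr rfl fun k _ => intervalIntegral.integral_const_mul _ _
    show T⁻¹ * (∫ t in (0:ℝ)..T, F t i) = _
    rw [h1, Finset.mul_sum]
    simp only [Matrix.mulVec, dotProduct, hy]
    exact Finset.sum_congr rfl fun k _ => by ring
  -- z - y → 0
  have hzy : ∀ k : Fin d, Tendsto (fun T => z T k - y T k) atTop (nhds 0) := by
    intro k
    have hbound : ∀ a b : ℝ, -r ≤ min a b → |∫ t in a..b, x t k| ≤ |b - a| := by
      intro a b hab
      have h := intervalIntegral.norm_integral_le_of_norm_le_const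
        (C := 1) (f := fun t => x t k) (a := a) (b := b) ?_
      · simpa using h
      · intro t ht
        have htr : -r ≤ t := le_of_lt (lt_of_le_of_lt hab ht.1)
        rw [Real.norm_eq_abs, abs_of_nonneg (hx01 t htr k).1]
        exact (hx01 t htr k).2
    have key : Tendsto (fun T => T⁻¹ *
        ((∫ t in (0:ℝ)..T, x t k) - ∫ t in (0:ℝ)..T, x (t - r) k)) atTop (nhds 0) := by
      apply aux_inv_mul (C := r + r)
      filter_upwards [eventually_ge_atTop (max 0 r)] with T hT
      have hT0 : (0:ℝ) ≤ T := le_trans (le_max_left _ _) hT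
      have hTr : r ≤ T := le_trans (le_max_right _ _) hT
      have hshift : (∫ t in (0:ℝ)..T, x (t - r) k) = ∫ t in (-r)..(T - r), x t k := by
        have := intervalIntegral.integral_comp_sub_right (a := (0:ℝ)) (b := T)
          (fun t => x t k) r
        simpa using this
      have hadd1 : (∫ t in (-r)..(0:ℝ), x t k) + (∫ t in (0:ℝ)..T, x t k)
          = ∫ t in (-r)..T, x t k :=
        intervalIntegral.integral_add_adjacent_intervals
          (hxint k (-r) 0 le_rfl (by linarith)) (hxint k 0 T (by linarith) (by linarith))
      have hadd2 : (∫ t in (-r)..(T - r), x t k) + (∫ t in (T - r)..T, x t k)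
          = ∫ t in (-r)..T, x t k :=
        intervalIntegral.integral_add_adjacent_intervals
          (hxint k (-r) (T - r) le_rfl (by linarith)) (hxint k (T - r) T (by linarith) (by linarith))
      have hc : (∫ t in (0:ℝ)..T, x t k) - (∫ t in (0:ℝ)..T, x (t - r) k)
          = (∫ t in (T - r)..T, x t k) - (∫ t in (-r)..(0:ℝ), x t k) := by
        rw [hshift]; linarith
      rw [hc]
      have hb1 : |∫ t in (T - r)..T, x t k| ≤ r := by
        have := hbound (T - r) T (by rw [min_eq_left (by linarith)]; linarith)
        calc |∫ t in (T - r)..T, x t k| ≤ |T - (T - r)| := this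
          _ = r := by rw [abs_of_nonneg (by linarith)]; ring
      have hb2 : |∫ t in (-r)..(0:ℝ), x t k| ≤ r := by
        have := hbound (-r) 0 (by rw [min_eq_left (by linarith)])
        calc |∫ t in (-r)..(0:ℝ), x t k| ≤ |0 - (-r)| := this
          _ = r := by rw [abs_of_nonneg (by linarith)]; ring
      have := abs_sub (∫ t in (T - r)..T, x t k) (∫ t in (-r)..(0:ℝ), x t k)
      linarith
    apply key.congr
    intro T
    simp only [hz, hy, mul_sub]
  -- A z i - w i → 0
  have hAzw : ∀ i : Fin d, Tendsto (fun T => A.mulVec (z T) i - w T i) atTop (nhds 0) := by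
    intro i
    have h1 : Tendsto (fun T => ∑ k, A i k * (z T k - y T k)) atTop (nhds 0) := by
      have := tendsto_finset_sum (Finset.univ : Finset (Fin d))
        (fun k _ => ((hzy k).const_mul (A i k)))
      simpa using this
    apply h1.congr'
    filter_upwards [eventually_ge_atTop (0:ℝ)] with T hT
    rw [hwy i T hT]
    simp only [Matrix.mulVec, dotProduct]
    rw [← Finset.sum_sub_distrib]
    congr 1; funext k; ring
  -- A z i - A z j → 0
  have hAzij : ∀ i j : Fin d,
      Tendsto (fun T => A.mulVec (z T) i - A.mulVec (z T) j) atTop (nhds 0) := by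
    intro i j
    have := ((hAzw i).sub (hAzw j)).add (hwij i j)
    simp only [sub_zero, add_zero, zero_add] at this
    apply this.congr
    intro T; ring
  -- z T in K eventually
  have hd0 : 0 < d := by omega
  set i0 : Fin d := ⟨0, hd0⟩ with hi0
  set K : Set (Fin d → ℝ) := stdSimplex ℝ (Fin d) ∩ {q | ∀ i, ε ≤ q i} with hK
  have hzK : ∀ᶠ T in atTop, z T ∈ K := by
    filter_upwards [eventually_ge_atTop (1:ℝ)] with T hT1
    have hTpos : (0:ℝ) < T := lt_of_lt_of_le one_pos hT1
    have hεz : ∀ i : Fin d, ε ≤ z T i := by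
      intro i
      have hmono : (∫ _t in (0:ℝ)..T, ε) ≤ ∫ t in (0:ℝ)..T, x t i := by
        apply intervalIntegral.integral_mono_on hTpos.le intervalIntegrable_const
          (hxint i 0 T (by linarith) (by linarith))
        intro t ht
        exact hint t ht.1 i
      have hconst : (∫ _t in (0:ℝ)..T, ε) = T * ε := by
        simp [mul_comm]
      have h2 : T * ε ≤ ∫ t in (0:ℝ)..T, x t i := hconst ▸ hmono
      have h3 := mul_le_mul_of_nonneg_left h2 (inv_nonneg.2 hTpos.le)
      calc ε = T⁻¹ * (T * ε) := by field_simp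
        _ ≤ T⁻¹ * ∫ t in (0:ℝ)..T, x t i := h3
        _ = z T i := rfl
    have hsum : ∑ i, z T i = 1 := by
      have h1 : ∑ i, z T i = T⁻¹ * ∑ i, ∫ t in (0:ℝ)..T, x t i := by
        rw [Finset.mul_sum]
      have h2 : ∑ i : Fin d, ∫ t in (0:ℝ)..T, x t i = ∫ t in (0:ℝ)..T, (1:ℝ) := by
        rw [← intervalIntegral.integral_finset_sum
          (fun i _ => hxint i 0 T (by linarith) (by linarith))]
        apply intervalIntegral.integral_congr
        intro t ht
        rw [Set.uIcc_of_le hTpos.le] at ht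
        exact (hxsimplex t (by linarith [ht.1])).2
      rw [h1, h2]
      simp
      field_simp
    refine ⟨⟨fun i => le_trans hε.le (hεz i), hsum⟩, fun i => hεz i⟩
  -- the function g
  set g : (Fin d → ℝ) → ℝ := fun q => ∑ i, (A.mulVec q i - A.mulVec q i0) ^ 2 with hg
  have hgc : Continuous g := by
    have hmv : ∀ i : Fin d, Continuous fun q : Fin d → ℝ => A.mulVec q i := by
      intro i
      simp only [Matrix.mulVec, dotProduct]
      exact continuous_finset_sum _ fun k _ => continuous_const.mul (continuous_apply k)
    exact continuous_finset_sum _ fun i _ => ((hmv i).sub (hmv i0)).pow 2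
  have hgz : Tendsto (fun T => g (z T)) atTop (nhds 0) := by
    have := tendsto_finset_sum (Finset.univ : Finset (Fin d))
      (fun i _ => ((hAzij i i0).pow 2))
    simpa using this
  have hKc : IsCompact K := by
    apply (isCompact_stdSimplex ℝ (Fin d)).inter_right
    have : {q : Fin d → ℝ | ∀ i, ε ≤ q i} = ⋂ i, {q | ε ≤ q i} := by ext q; simp [Set.mem_iInter]
    rw [this]
    exact isClosed_iInter fun i => isClosed_le continuous_const (continuous_apply i)
  have hguniq : ∀ q ∈ K, g q = 0 → q = p := by
    intro q hq hgq
    have h0 : ∀ i : Fin d, (A.mulVec q i - A.mulVec q i0) ^ 2 = 0 := by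
      intro i
      have := (Finset.sum_eq_zero_iff_of_nonneg (fun i _ => sq_nonneg _)).1 hgq i
        (Finset.mem_univ i)
      exact this
    have heq : ∀ i j : Fin d, A.mulVec q i = A.mulVec q j := by
      intro i j
      have hi := sub_eq_zero.1 (sq_eq_zero_iff.1 (h0 i))
      have hj := sub_eq_zero.1 (sq_eq_zero_iff.1 (h0 j))
      rw [hi, hj]
    exact hpuniq q hq.1 (fun i => lt_of_lt_of_le hε (hq.2 i)) heq
  have hmain : Tendsto z atTop (nhds p) :=
    aux_compact_tendsto hKc hgc.continuousOn (fun q _ => Finset.sum_nonneg fun i _ => sq_nonneg _)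
      hguniq hzK hgz
  intro i
  exact (tendsto_pi_nhds.1 hmain) i
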